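/- Let G⁺ be a finite simple graph, let x be a simplicial vertex of G⁺, and let G = G⁺ − x be the graph obtained from G⁺ by deleting x. Then for every real number t ≥ 0, if G⁺ is t-tough then G is t-tough. (In other words, adding a simplicial vertex to a graph does not increase its toughness.) -/

import Mathlib

/-- The number of connected components of the subgraph of `G` induced on the
complement of the vertex set `S` (i.e. of `G − S`). -/
noncomputable def numComponents {V : Type*} (G : SimpleGraph V) (S : Set V) : ℕ :=
  Nat.card (G.induce Sᶜ).ConnectedComponent

/-- A graph `G` is `t`-tough if for every set `S` of vertices whose removal
disconnects the graph, one has `|S| ≥ t · c(G − S)`. -/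
def IsTough {V : Type*} (t : ℝ) (G : SimpleGraph V) : Prop :=
  ∀ S : Set V, ¬ (G.induce Sᶜ).Connected → t * (numComponents G S : ℝ) ≤ (S.ncard : ℝ)

/-- Adding a simplicial vertex to a graph does not increase its toughness:
if `x` is a simplicial vertex of the finite graph `G⁺` and `G⁺` is `t`-tough
(`t ≥ 0`), then `G = G⁺ − x` is `t`-tough. -/
lemma aux_shortcut {V : Type*} (Gp : SimpleGraph V) (x : V)
    (hsimp : ∀ a b : V, Gp.Adj x a → Gp.Adj x b → a ≠ b → Gp.Adj a b)
    (K : Set V) :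
    ∀ n : ℕ, ∀ (a b : K) (w : (Gp.induce K).Walk a b), w.length ≤ n →
    ∀ (ha : (a : V) ≠ x) (hb : (b : V) ≠ x),
    (Gp.induce (K \ {x})).Reachable ⟨a.1, a.2, ha⟩ ⟨b.1, b.2, hb⟩ := by
  intro n
  induction n with
  | zero =>
    intro a b w hw ha hb
    cases w with
    | nil => exact SimpleGraph.Reachable.refl _
    | cons h p => simp at hw
  | succ n ih =>
    intro a b w hw ha hb
    cases w with
    | nil => exact SimpleGraph.Reachable.refl _
    | cons h p =>
      rename_i c
      by_cases hc : (c : V) = x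
      · -- next vertex is x
        cases p with
        | nil => exact absurd hc hb
        | cons h2 q =>
          rename_i d
          have hax : Gp.Adj (a : V) x := by
            have h' : Gp.Adj (a : V) (c : V) := by simpa using h
            rwa [hc] at h'
          have hxd : Gp.Adj x (d : V) := by
            have h' : Gp.Adj (c : V) (d : V) := by simpa using h2
            rwa [hc] at h'
          have hdx : (d : V) ≠ x := fun he => Gp.irrefl (he ▸ hxd)
          have hq : q.length ≤ n := by
            simp only [SimpleGraph.Walk.length_cons] at hw; omega
          have hreach := ih d b q hq hdx hb
          by_cases had : (a : V) = (d : V)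
          · have : (⟨a.1, a.2, ha⟩ : (K \ {x} : Set V)) = ⟨d.1, d.2, hdx⟩ :=
              Subtype.ext had
            rw [this]; exact hreach
          · have hadj : Gp.Adj (a : V) (d : V) :=
              hsimp _ _ hax.symm hxd had
            have : (Gp.induce (K \ {x})).Adj ⟨a.1, a.2, ha⟩ ⟨d.1, d.2, hdx⟩ := by
              simpa using hadj
            exact this.reachable.trans hreach
      · have hp : p.length ≤ n := by
          simp only [SimpleGraph.Walk.length_cons] at hw; omega
        have hreach := ih c b p hp hc hb
        have hadj : Gp.Adj (a : V) (c : V) := by simpa using h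
        have : (Gp.induce (K \ {x})).Adj ⟨a.1, a.2, ha⟩ ⟨c.1, c.2, hc⟩ := by
          simpa using hadj
        exact this.reachable.trans hreach

theorem deleting_simplicial_vertex_preserves_toughness
    {V : Type*} [Fintype V] (Gp : SimpleGraph V) (x : V)
    (hsimp : ∀ a b : V, Gp.Adj x a → Gp.Adj x b → a ≠ b → Gp.Adj a b)
    (t : ℝ) (ht : 0 ≤ t) (hGp : IsTough t Gp) :
    IsTough t (Gp.induce {x}ᶜ) := by
  classical
  intro S hdisc
  by_cases hne : Nonempty ↑(Sᶜ)
  case neg =>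
    rw [not_nonempty_iff] at hne
    have : IsEmpty ((Gp.induce {x}ᶜ).induce Sᶜ).ConnectedComponent := by
      constructor; intro c; exact c.ind (fun v => absurd ⟨v⟩ (not_nonempty_iff.2 hne))
    have h0 : numComponents (Gp.induce {x}ᶜ) S = 0 := by
      simp [numComponents, Nat.card_of_isEmpty]
    rw [h0]
    simp
  case pos =>
    set S' : Set V := Subtype.val '' S with hS'
    -- membership facts
    have hmemK : ∀ u : ↑(Sᶜ), (u : { v : V // v ∈ ({x}ᶜ : Set V)}).1 ∈ S'ᶜ := by
      intro u
      intro ⟨w, hw, heq⟩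
      exact u.2 (by rwa [Subtype.val_injective heq] at hw)
    -- forward vertex map
    let f : ↑(Sᶜ) → ↑(S'ᶜ) := fun u => ⟨u.1.1, hmemK u⟩
    have hfx : ∀ u : ↑(Sᶜ), (f u : V) ≠ x := fun u => u.1.2
    -- homomorphism from G−S to Gp−S'
    let F : ((Gp.induce {x}ᶜ).induce Sᶜ) →g (Gp.induce S'ᶜ) :=
      ⟨f, fun h => by simpa using h⟩
    -- backward homomorphism from Gp.induce (S'ᶜ \ {x})
    let F' : (Gp.induce (S'ᶜ \ {x})) →g ((Gp.induce {x}ᶜ).induce Sᶜ) :=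
      ⟨fun v => ⟨⟨v.1, v.2.2⟩, fun hv => v.2.1 ⟨_, hv, rfl⟩⟩, fun h => by simpa using h⟩
    -- key reachability transfer
    have key : ∀ u v : ↑(Sᶜ), (Gp.induce S'ᶜ).Reachable (f u) (f v) →
        ((Gp.induce {x}ᶜ).induce Sᶜ).Reachable u v := by
      intro u v ⟨w⟩
      have hr := aux_shortcut Gp x hsimp S'ᶜ w.length (f u) (f v) w le_rfl (hfx u) (hfx v)
      have := hr.map F'
      have hu : F' ⟨(f u : V), (f u).2, hfx u⟩ = u := by
        apply Subtype.ext; apply Subtype.ext; rfl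
      have hv : F' ⟨(f v : V), (f v).2, hfx v⟩ = v := by
        apply Subtype.ext; apply Subtype.ext; rfl
      rwa [hu, hv] at this
    -- disconnectedness transfers
    have hdisc' : ¬ (Gp.induce S'ᶜ).Connected := by
      intro hcon
      haveI := hne
      exact hdisc ⟨fun u v => key u v (hcon.preconnected (f u) (f v))⟩
    have hmain := hGp S' hdisc'
    -- component count comparison
    have hinj : Function.Injective (SimpleGraph.ConnectedComponent.map F) := by
      intro c1 c2
      refine SimpleGraph.ConnectedComponent.ind₂ (fun u v h => ?_) c1 c2
      rw [SimpleGraph.ConnectedComponent.map_mk, SimpleGraph.ConnectedComponent.map_mk,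
        SimpleGraph.ConnectedComponent.eq] at h
      exact SimpleGraph.ConnectedComponent.sound (key u v h)
    have hle : numComponents (Gp.induce {x}ᶜ) S ≤ numComponents Gp S' :=
      Nat.card_le_card_of_injective _ hinj
    have hcard : S'.ncard = S.ncard := Set.ncard_image_of_injective S Subtype.val_injective
    calc t * (numComponents (Gp.induce {x}ᶜ) S : ℝ)
        ≤ t * (numComponents Gp S' : ℝ) := by
          exact mul_le_mul_of_nonneg_left (Nat.cast_le.2 hle) ht
      _ ≤ (S'.ncard : ℝ) := hmain
      _ = (S.ncard : ℝ) := by rw [hcard]
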